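/- arXiv:math/0701894 — 3 statements merged into one kernel-verified Lean document; each statement's English description precedes it below -/
import Mathlib

section
/- Let K be a field and let N be a differential module over K((x)) which is regular, i.e., admits a basis in which the matrix of D has all its entries in K[[x]]. Let φ ∈ K((x)) with v(φ) < 0. Then the only element n ∈ N satisfying D(n) = φ·n is n = 0. (There are no nonzero horizontal homomorphisms from the rank-one irregular module L_φ to a regular module.) -/
/-- No nonzero horizontal element of a regular differential module satisfies D n = φ·n
with v(φ) < 0: Hom_∇(L_φ, regular) = 0 for irregular rank-one L_φ. -/
theorem stmt_9 {K : Type*} [Field K]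
    (dd : LaurentSeries K → LaurentSeries K)
    (hdd : ∀ (f : LaurentSeries K) (n : ℤ), (dd f).coeff n = n • f.coeff n)
    {N : Type*} [AddCommGroup N] [Module (LaurentSeries K) N]
    (D : N → N)
    (hDadd : ∀ m m' : N, D (m + m') = D m + D m')
    (hDLeib : ∀ (f : LaurentSeries K) (m : N), D (f • m) = dd f • m + f • D m)
    (hreg : ∃ (ν : ℕ) (b : Module.Basis (Fin ν) (LaurentSeries K) N)
      (C : Matrix (Fin ν) (Fin ν) (LaurentSeries K)),
      (∀ (i j : Fin ν) (m : ℤ), m < 0 → (C i j).coeff m = 0) ∧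
      ∀ i : Fin ν, D (b i) = ∑ j : Fin ν, C j i • b j)
    (φ : LaurentSeries K) (hφ : φ.order < 0) :
    ∀ n : N, D n = φ • n → n = 0 := by
  classical
  obtain ⟨ν, b, C, hC, hDb⟩ := hreg
  intro n hn
  by_contra hn0
  set f : Fin ν → LaurentSeries K := fun i => b.repr n i with hfdef
  have hD0 : D 0 = 0 := by
    have h := hDadd 0 0
    rw [add_zero] at h
    exact left_eq_add.mp h
  have hDsum : ∀ (s : Finset (Fin ν)) (g : Fin ν → N),
      D (∑ i ∈ s, g i) = ∑ i ∈ s, D (g i) := by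
    intro s g
    induction s using Finset.induction with
    | empty => simpa using hD0
    | insert _ _ h ih => rw [Finset.sum_insert h, Finset.sum_insert h, hDadd, ih]
  -- coordinate equations
  have hrepr : ∑ i, f i • b i = n := b.sum_repr n
  have h1 : D n = ∑ j, (dd (f j) + ∑ i, C j i * f i) • b j := by
    conv_lhs => rw [← hrepr]
    rw [hDsum]
    have : ∀ i, D (f i • b i) = dd (f i) • b i + ∑ j, (C j i * f i) • b j := by
      intro i
      rw [hDLeib, hDb i, Finset.smul_sum]
      congr 1
      refine Finset.sum_congr rfl fun j _ => ?_
      rw [smul_smul, mul_comm]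
    calc ∑ i, D (f i • b i)
        = ∑ i, (dd (f i) • b i + ∑ j, (C j i * f i) • b j) :=
          Finset.sum_congr rfl fun i _ => this i
      _ = (∑ i, dd (f i) • b i) + ∑ i, ∑ j, (C j i * f i) • b j :=
          Finset.sum_add_distrib
      _ = (∑ j, dd (f j) • b j) + ∑ j, (∑ i, C j i * f i) • b j := by
          rw [Finset.sum_comm]
          congr 1
          exact Finset.sum_congr rfl fun j _ => (Finset.sum_smul).symm
      _ = ∑ j, (dd (f j) + ∑ i, C j i * f i) • b j := by
          rw [← Finset.sum_add_distrib]
          exact Finset.sum_congr rfl fun j _ => (add_smul _ _ _).symm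
  have h2 : D n = ∑ j, (φ * f j) • b j := by
    rw [hn]
    conv_lhs => rw [← hrepr]
    rw [Finset.smul_sum]
    exact Finset.sum_congr rfl fun j _ => (smul_smul _ _ _)
  have hcoord : ∀ j, dd (f j) + ∑ i, C j i * f i = φ * f j := by
    intro j
    have h3 := h1.symm.trans h2
    have h4 := congrArg (fun m => b.repr m j) h3
    simpa [Finsupp.single_apply, Finset.sum_add_distrib, Finset.sum_ite_eq'] using h4
  -- some coordinate is nonzero
  have hfne : ∃ i, f i ≠ 0 := by
    by_contra h
    push_neg at h
    apply hn0
    rw [← hrepr]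
    simp [h]
  obtain ⟨i0, hi0⟩ := hfne
  set S : Finset (Fin ν) := Finset.univ.filter (fun i => f i ≠ 0) with hS
  have hSne : S.Nonempty := ⟨i0, Finset.mem_filter.mpr ⟨Finset.mem_univ _, hi0⟩⟩
  obtain ⟨j, hjS, hjmin⟩ := S.exists_min_image (fun i => (f i).order) hSne
  have hj0 : f j ≠ 0 := (Finset.mem_filter.mp hjS).2
  set r := (f j).order with hr
  have hmin : ∀ i, f i ≠ 0 → r ≤ (f i).order := fun i hi =>
    hjmin i (Finset.mem_filter.mpr ⟨Finset.mem_univ _, hi⟩)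
  have hφ0 : φ ≠ 0 := by
    rintro rfl
    simp [HahnSeries.order_zero] at hφ
  set m := φ.order + r with hm
  have hmr : m < r := by
    rw [hm]
    exact add_lt_of_neg_left r hφ
  have hcm := congrArg (fun g => HahnSeries.coeff g m) (hcoord j)
  simp only [HahnSeries.coeff_add] at hcm
  have hdd0 : (dd (f j)).coeff m = 0 := by
    rw [hdd, HahnSeries.coeff_eq_zero_of_lt_order hmr, smul_zero]
  have hsum0 : (∑ i, C j i * f i).coeff m = 0 := by
    rw [show (∑ i, C j i * f i).coeff m = ∑ i, (C j i * f i).coeff m from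
      map_sum (HahnSeries.coeff.addMonoidHom m) _ _]
    refine Finset.sum_eq_zero fun i _ => ?_
    by_cases hfi : f i = 0
    · simp [hfi]
    by_cases hCi : C j i = 0
    · simp [hCi]
    have hCo : 0 ≤ (C j i).order := by
      by_contra h
      push_neg at h
      exact (HahnSeries.coeff_order_eq_zero.not.mpr hCi) (hC j i _ h)
    have : m < (C j i * f i).order := by
      rw [HahnSeries.order_mul hCi hfi]
      calc m < r := hmr
      _ ≤ (f i).order := hmin i hfi
      _ ≤ (C j i).order + (f i).order := le_add_of_nonneg_left hCo
    exact HahnSeries.coeff_eq_zero_of_lt_order this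
  have hrhs : (φ * f j).coeff m ≠ 0 := by
    rw [hm, hr, HahnSeries.coeff_mul_order_add_order]
    exact mul_ne_zero (HahnSeries.leadingCoeff_ne_zero.mpr hφ0)
      (HahnSeries.leadingCoeff_ne_zero.mpr hj0)
  rw [hdd0, hsum0, add_zero] at hcm
  exact hrhs hcm.symm
end

section
/- (Deligne's lattice lemma.) Let A be a discrete valuation ring with fraction field K and residue field k. Let M be a free A((x))-module of finite rank, let 𝕄 ⊆ M be the free A[[x]]-submodule generated by an A((x))-basis of M, and let N be a finitely generated A[[x]]-submodule of M with 𝕄 ⊆ N and x^s·N ⊆ 𝕄 for some s ∈ ℕ. Let q : M → M_k := k((x)) ⊗_{A((x))} M be the natural map induced by the coefficientwise reduction A((x)) → k((x)). Then the K-vector space (N/𝕄) ⊗_A K and the k-vector space q(N)/q(𝕄) are finite-dimensional, and dim_K((N/𝕄) ⊗_A K) ≥ dim_k(q(N)/q(𝕄)). -/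
open TensorProduct

namespace Deligne14

variable {A : Type*} [CommRing A]

lemma exists_coe_eq {g : LaurentSeries A} (h : ∀ d : ℤ, d < 0 → g.coeff d = 0) :
    ∃ f : PowerSeries A, (f : LaurentSeries A) = g := by
  refine ⟨PowerSeries.mk fun n => g.coeff n, ?_⟩
  ext d
  rw [PowerSeries.coeff_coe]
  split_ifs with hd
  · exact (h d hd).symm
  · rw [PowerSeries.coeff_mk]
    congr 1
    omega

lemma coe_algebraMap_eq_single (a : A) :
    algebraMap (PowerSeries A) (LaurentSeries A) (algebraMap A (PowerSeries A) a)
      = HahnSeries.single (0 : ℤ) a := by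
  rw [PowerSeries.algebraMap_apply]
  simp only [Algebra.algebraMap_self, RingHom.id_apply]
  rw [LaurentSeries.coe_algebraMap]
  change ((PowerSeries.C a : PowerSeries A) : LaurentSeries A) = _
  rw [PowerSeries.coe_C, HahnSeries.C_apply]

lemma coe_X_pow_eq_single (s : ℕ) :
    ((PowerSeries.X ^ s : PowerSeries A) : LaurentSeries A) = HahnSeries.single (s : ℤ) 1 := by
  rw [PowerSeries.coe_pow, HahnSeries.ofPowerSeries_X, HahnSeries.single_pow]
  simp

end Deligne14

open Deligne14 in
set_option maxHeartbeats 2000000 in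
/-- Deligne's lattice lemma: for lattices 𝕄 ⊆ N in a free A((x))-module M with x^s·N ⊆ 𝕄,
the generic fiber dimension of N/𝕄 bounds the special fiber dimension of q(N)/q(𝕄). -/
theorem stmt_14 {A : Type*} [CommRing A] [IsDomain A] [IsDiscreteValuationRing A]
    {M : Type*} [AddCommGroup M] [Module (PowerSeries A) M] [Module (LaurentSeries A) M]
    [IsScalarTower (PowerSeries A) (LaurentSeries A) M]
    (μ : ℕ) (b : Module.Basis (Fin μ) (LaurentSeries A) M)
    (N : Submodule (PowerSeries A) M)
    (hMN : Submodule.span (PowerSeries A) (Set.range b) ≤ N)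
    (hNfg : N.FG)
    (s : ℕ)
    (hxs : ∀ v ∈ N, (PowerSeries.X : PowerSeries A) ^ s • v ∈
      Submodule.span (PowerSeries A) (Set.range b))
    (ψ : LaurentSeries A → LaurentSeries (IsLocalRing.ResidueField A))
    (hψ : ∀ (g : LaurentSeries A) (n : ℤ), (ψ g).coeff n = IsLocalRing.residue A (g.coeff n))
    {Mk : Type*} [AddCommGroup Mk]
    [Module (LaurentSeries (IsLocalRing.ResidueField A)) Mk]
    [Module (IsLocalRing.ResidueField A) Mk]
    [IsScalarTower (IsLocalRing.ResidueField A)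
      (LaurentSeries (IsLocalRing.ResidueField A)) Mk]
    (q : M → Mk)
    (hqadd : ∀ m m' : M, q (m + m') = q m + q m')
    (hqsl : ∀ (g : LaurentSeries A) (m : M), q (g • m) = ψ g • q m)
    (bk : Module.Basis (Fin μ) (LaurentSeries (IsLocalRing.ResidueField A)) Mk)
    (hbk : ∀ i : Fin μ, bk i = q (b i)) :
    FiniteDimensional (FractionRing A)
      ((FractionRing A) ⊗[A] (RestrictScalars A (PowerSeries A)
        (↥N ⧸ Submodule.comap N.subtype
          (Submodule.span (PowerSeries A) (Set.range b))))) ∧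
    FiniteDimensional (IsLocalRing.ResidueField A)
      (↥(Submodule.span (IsLocalRing.ResidueField A) (q '' (N : Set M))) ⧸
        Submodule.comap
          (Submodule.span (IsLocalRing.ResidueField A) (q '' (N : Set M))).subtype
          (Submodule.span (IsLocalRing.ResidueField A)
            (q '' ((Submodule.span (PowerSeries A) (Set.range b) : Submodule (PowerSeries A) M)
              : Set M)))) ∧
    Module.finrank (IsLocalRing.ResidueField A)
      (↥(Submodule.span (IsLocalRing.ResidueField A) (q '' (N : Set M))) ⧸
        Submodule.comap
          (Submodule.span (IsLocalRing.ResidueField A) (q '' (N : Set M))).subtype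
          (Submodule.span (IsLocalRing.ResidueField A)
            (q '' ((Submodule.span (PowerSeries A) (Set.range b) : Submodule (PowerSeries A) M)
              : Set M))))
      ≤ Module.finrank (FractionRing A)
        ((FractionRing A) ⊗[A] (RestrictScalars A (PowerSeries A)
          (↥N ⧸ Submodule.comap N.subtype
            (Submodule.span (PowerSeries A) (Set.range b))))) := by
  classical
  set 𝕄 : Submodule (PowerSeries A) M := Submodule.span (PowerSeries A) (Set.range b) with h𝕄
  set co : M → Fin μ → LaurentSeries A := fun m i => b.repr m i with hco
  -- basic coordinate facts
  have hco_add : ∀ (m m' : M) (i : Fin μ), co (m + m') i = co m i + co m' i := by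
    intro m m' i; simp [hco]
  have hco_smulL : ∀ (g : (LaurentSeries A)) (m : M) (i : Fin μ), co (g • m) i = g * co m i := by
    intro g m i; simp [hco]
  have hco_smulR : ∀ (f : (PowerSeries A)) (m : M) (i : Fin μ),
      co (f • m) i = (algebraMap (PowerSeries A) (LaurentSeries A) f) * co m i := by
    intro f m i
    rw [← hco_smulL, algebraMap_smul]
  -- F1a
  have hMcoeff : ∀ m ∈ 𝕄, ∀ i : Fin μ, ∃ f : (PowerSeries A), algebraMap (PowerSeries A) (LaurentSeries A) f = co m i := by
    intro m hm
    induction hm using Submodule.span_induction with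
    | mem x h =>
      obtain ⟨j, rfl⟩ := h
      intro i
      rcases eq_or_ne i j with h | h
      · subst h
        exact ⟨1, by simp [hco, Module.Basis.repr_self]⟩
      · exact ⟨0, by simp [hco, Module.Basis.repr_self, Finsupp.single_apply, (Ne.symm h)]⟩
    | zero => exact fun i => ⟨0, by simp [hco]⟩
    | add x y hx hy ihx ihy =>
      intro i
      obtain ⟨f, hf⟩ := ihx i
      obtain ⟨f', hf'⟩ := ihy i
      exact ⟨f + f', by rw [map_add, hf, hf', hco_add]⟩
    | smul a x hx ih =>
      intro i
      obtain ⟨f, hf⟩ := ih i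
      exact ⟨a * f, by rw [map_mul, hf, hco_smulR]⟩
  -- F1b
  have hcoeffM : ∀ m : M, (∀ i : Fin μ, ∃ f : (PowerSeries A), algebraMap (PowerSeries A) (LaurentSeries A) f = co m i) → m ∈ 𝕄 := by
    intro m h
    choose f hf using h
    have hm : m = ∑ i, f i • b i := by
      conv_lhs => rw [← b.sum_repr m]
      refine Finset.sum_congr rfl fun i _ => ?_
      have : (b.repr m i) = algebraMap (PowerSeries A) (LaurentSeries A) (f i) := (hf i).symm
      rw [this, algebraMap_smul]
    rw [hm]
    exact Submodule.sum_mem _ fun i _ =>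
      Submodule.smul_mem _ _ (Submodule.subset_span ⟨i, rfl⟩)
  -- F1a'
  have hMneg : ∀ m ∈ 𝕄, ∀ (i : Fin μ) (d : ℤ), d < 0 → (co m i).coeff d = 0 := by
    intro m hm i d hd
    obtain ⟨f, hf⟩ := hMcoeff m hm i
    rw [← hf]
    rw [show (algebraMap (PowerSeries A) (LaurentSeries A) f) = (f : LaurentSeries A) from rfl, PowerSeries.coeff_coe,
      if_pos hd]
  -- F3
  have hnegM : ∀ m : M, (∀ (i : Fin μ) (d : ℤ), d < 0 → (co m i).coeff d = 0) → m ∈ 𝕄 := by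
    intro m h
    exact hcoeffM m fun i => exists_coe_eq (h i)
  -- F2
  have hNcoeff : ∀ m ∈ N, ∀ (i : Fin μ) (d : ℤ), d < -(s : ℤ) → (co m i).coeff d = 0 := by
    intro m hm i d hd
    have h1 := hMneg _ (hxs m hm) i (d + (s : ℤ)) (by omega)
    rw [hco_smulR] at h1
    rw [show (algebraMap (PowerSeries A) (LaurentSeries A) (PowerSeries.X ^ s)) = HahnSeries.single ((s : ℕ) : ℤ) 1 from
      coe_X_pow_eq_single s, HahnSeries.coeff_single_mul_add, one_mul] at h1
    exact h1
  -- Part 1: the quotient N/𝕄 as an A-module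
  set p : Submodule (PowerSeries A) ↥N := Submodule.comap N.subtype 𝕄 with hp
  set φfun : ↥N → (Fin μ × Fin s → A) := fun n pr => (co (n : M) pr.1).coeff ((pr.2 : ℤ) - s) with hφ
  have hφadd : ∀ x y : ↥N, φfun (x + y) = φfun x + φfun y := by
    intro x y; funext pr
    simp [hφ, hco_add, HahnSeries.coeff_add]
  have hφker : ∀ n : ↥N, n ∈ p → φfun n = 0 := by
    intro n hn; funext pr
    have h2 := pr.2.isLt
    have h1 : ((pr.2 : ℤ) - s) < 0 := by omega
    have := hMneg _ (Submodule.mem_comap.mp hn) pr.1 _ h1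
    simpa [hφ] using this
  have hφsmul : ∀ (a : A) (n : ↥N), φfun (algebraMap A (PowerSeries A) a • n) = a • φfun n := by
    intro a n; funext pr
    have hcoe : ((algebraMap A (PowerSeries A) a • n : ↥N) : M) = algebraMap A (PowerSeries A) a • (n : M) := rfl
    simp only [hφ, hcoe, hco_smulR, coe_algebraMap_eq_single, HahnSeries.coeff_single_zero_mul,
      Pi.smul_apply, smul_eq_mul]
  have hφrel : ∀ x y : ↥N, p.quotientRel x y → φfun x = φfun y := by
    intro x y hxy
    rw [Submodule.quotientRel_def] at hxy
    have h1 : φfun x = φfun (x - y) + φfun y := by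
      rw [← hφadd, sub_add_cancel]
    rw [h1, hφker _ hxy, zero_add]
  set ψfun : (↥N ⧸ p) → (Fin μ × Fin s → A) := fun y =>
    Quotient.liftOn' y φfun hφrel with hψf
  have hψmk : ∀ n : ↥N, ψfun (Submodule.Quotient.mk n) = φfun n := fun n => rfl
  set e := RestrictScalars.addEquiv A (PowerSeries A) (↥N ⧸ p) with he
  have hψadd : ∀ y z : ↥N ⧸ p, ψfun (y + z) = ψfun y + ψfun z := by
    intro y z
    obtain ⟨y, rfl⟩ := Submodule.Quotient.mk_surjective p y
    obtain ⟨z, rfl⟩ := Submodule.Quotient.mk_surjective p z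
    rw [← Submodule.Quotient.mk_add, hψmk, hψmk, hψmk, hφadd]
  set ψlin : (RestrictScalars A (PowerSeries A) (↥N ⧸ p)) →ₗ[A] (Fin μ × Fin s → A) :=
    { toFun := fun x => ψfun (e x),
      map_add' := fun x y => by exact hψadd (e x) (e y),
      map_smul' := fun a x => by
        show ψfun (algebraMap A (PowerSeries A) a • e x) = a • ψfun (e x)
        obtain ⟨n, hn⟩ := Submodule.Quotient.mk_surjective p (e x)
        rw [← hn, ← Submodule.Quotient.mk_smul, hψmk, hψmk, hφsmul] } with hψlin
  have hψinj : Function.Injective ψlin := by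
    rw [injective_iff_map_eq_zero]
    intro x hx
    obtain ⟨n, hn⟩ := Submodule.Quotient.mk_surjective p (e x)
    have hnM : (n : M) ∈ 𝕄 := by
      refine hnegM _ fun i d hd => ?_
      by_cases hds : d < -(s : ℤ)
      · exact hNcoeff _ n.2 i d hds
      · push_neg at hds
        have hj : ((d + s).toNat) < s := by omega
        have hx' : ψfun (e x) = 0 := hx
        rw [← hn, hψmk] at hx'
        have h3 := congrFun hx' (i, ⟨(d + s).toNat, hj⟩)
        simp only [hφ] at h3
        rw [show ((((d + s).toNat : ℕ) : ℤ) - s) = d by omega] at h3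
        exact h3
    have h0 : Submodule.Quotient.mk n = (0 : ↥N ⧸ p) := by
      rw [Submodule.Quotient.mk_eq_zero]
      exact Submodule.mem_comap.mpr hnM
    have hex : e x = 0 := by rw [← hn, h0]
    exact e.injective (by rw [hex, map_zero])
  haveI hfin : Module.Finite A (RestrictScalars A (PowerSeries A) (↥N ⧸ p)) :=
    Module.Finite.of_injective ψlin hψinj
  haveI hnz : NoZeroSMulDivisors A (RestrictScalars A (PowerSeries A) (↥N ⧸ p)) :=
    Function.Injective.noZeroSMulDivisors ψlin hψinj (map_zero _) (map_smul ψlin)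
  haveI hfree : Module.Free A (RestrictScalars A (PowerSeries A) (↥N ⧸ p)) :=
    haveI htf := Function.Injective.moduleIsTorsionFree ψlin hψinj (map_smul ψlin)
    by
    have h := @Module.free_of_finite_type_torsion_free' A _ (RestrictScalars A (PowerSeries A) (↥N ⧸ p)) _
      (inferInstanceAs (Module A (RestrictScalars A (PowerSeries A) (↥N ⧸ p)))) _ _ (by exact hfin) (by exact htf)
    exact h
  set ι := Module.Free.ChooseBasisIndex A (RestrictScalars A (PowerSeries A) (↥N ⧸ p)) with hι
  set cA := Module.Free.chooseBasis A (RestrictScalars A (PowerSeries A) (↥N ⧸ p)) with hcA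
  haveI : Fintype ι := inferInstance
  set bK : Module.Basis ι (FractionRing A)
      ((FractionRing A) ⊗[A] (RestrictScalars A (PowerSeries A) (↥N ⧸ p))) :=
    Algebra.TensorProduct.basis (FractionRing A) cA with hbK
  haveI fd1 : FiniteDimensional (FractionRing A)
      ((FractionRing A) ⊗[A] (RestrictScalars A (PowerSeries A) (↥N ⧸ p))) :=
    Module.Finite.of_basis bK
  have hrk1 : Module.finrank (FractionRing A)
      ((FractionRing A) ⊗[A] (RestrictScalars A (PowerSeries A) (↥N ⧸ p)))
        = Fintype.card ι :=
    Module.finrank_eq_card_basis bK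
  -- Part 2: the special fiber
  have hqres : ∀ (a : A) (m : M),
      q (algebraMap A (PowerSeries A) a • m) = IsLocalRing.residue A a • q m := by
    intro a m
    have h1 : algebraMap A (PowerSeries A) a • m
        = (algebraMap (PowerSeries A) (LaurentSeries A)
            (algebraMap A (PowerSeries A) a)) • m :=
      (algebraMap_smul _ _ _).symm
    rw [h1, hqsl]
    have h2 : ψ (algebraMap (PowerSeries A) (LaurentSeries A) (algebraMap A (PowerSeries A) a))
        = IsLocalRing.residue A a • (1 : LaurentSeries (IsLocalRing.ResidueField A)) := by
      rw [coe_algebraMap_eq_single]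
      ext d
      rw [hψ, HahnSeries.coeff_smul, HahnSeries.coeff_single, HahnSeries.coeff_one]
      split_ifs
      · simp
      · simp
    rw [h2, smul_assoc, one_smul]
  have hsur' := fun i : ι => Submodule.Quotient.mk_surjective p (e (cA i))
  choose x_ hx_ using hsur'
  have hx_' : ∀ i : ι, p.mkQ (x_ i) = e (cA i) := fun i => hx_ i
  have hdecomp : ∀ n : ↥N, ∃ a : ι → A,
      ((n : M) - ∑ i, algebraMap A (PowerSeries A) (a i) • ((x_ i : ↥N) : M)) ∈ 𝕄 := by
    intro n
    refine ⟨fun i => cA.repr (e.symm (p.mkQ n)) i, ?_⟩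
    have h1 : p.mkQ n = ∑ i,
        algebraMap A (PowerSeries A) (cA.repr (e.symm (p.mkQ n)) i) • p.mkQ (x_ i) := by
      conv_lhs => rw [← e.apply_symm_apply (p.mkQ n),
        ← cA.sum_repr (e.symm (p.mkQ n))]
      rw [map_sum]
      refine Finset.sum_congr rfl fun i _ => ?_
      rw [hx_' i]
      rfl
    have h2 : p.mkQ (n - ∑ i,
        algebraMap A (PowerSeries A) (cA.repr (e.symm (p.mkQ n)) i) • x_ i) = 0 := by
      rw [map_sub, map_sum, sub_eq_zero]
      conv_lhs => rw [h1]
      exact Finset.sum_congr rfl fun i _ => (map_smul p.mkQ _ _).symm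
    rw [Submodule.mkQ_apply, Submodule.Quotient.mk_eq_zero] at h2
    have h4 := Submodule.mem_comap.mp h2
    simpa using h4
  have hqN : ∀ i : ι, q ((x_ i : ↥N) : M) ∈
      Submodule.span (IsLocalRing.ResidueField A) (q '' (N : Set M)) := fun i =>
    Submodule.subset_span ⟨_, (x_ i).2, rfl⟩
  set Sk := Submodule.span (IsLocalRing.ResidueField A) (q '' (N : Set M)) with hSk
  set p₂ := Submodule.comap Sk.subtype
      (Submodule.span (IsLocalRing.ResidueField A) (q '' (𝕄 : Set M))) with hp₂
  set v : ι → (↥Sk ⧸ p₂) := fun i => p₂.mkQ ⟨q ((x_ i : ↥N) : M), hqN i⟩ with hv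
  set f := Fintype.linearCombination (IsLocalRing.ResidueField A)
      v with hfdef
  have hgen : ∀ (y : Mk) (hy : y ∈ Sk), p₂.mkQ ⟨y, hy⟩ ∈ LinearMap.range f := by
    intro y hy
    induction hy using Submodule.span_induction with
    | mem x hx =>
      obtain ⟨n, hnN, rfl⟩ := hx
      obtain ⟨a, hm⟩ := hdecomp ⟨n, hnN⟩
      have hn_eq : n = ((n : M) - ∑ i, algebraMap A (PowerSeries A) (a i) • ((x_ i : ↥N) : M))
          + ∑ i, algebraMap A (PowerSeries A) (a i) • ((x_ i : ↥N) : M) := by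
        abel
      have hq_eq : q n = q ((n : M) - ∑ i, algebraMap A (PowerSeries A) (a i) • ((x_ i : ↥N) : M))
          + ∑ i, IsLocalRing.residue A (a i) • q ((x_ i : ↥N) : M) := by
        conv_lhs => rw [hn_eq]
        rw [hqadd]
        congr 1
        have hsum : q (∑ i, algebraMap A (PowerSeries A) (a i) • ((x_ i : ↥N) : M))
            = ∑ i, q (algebraMap A (PowerSeries A) (a i) • ((x_ i : ↥N) : M)) :=
          map_sum (AddMonoidHom.mk' q hqadd) _ _
        rw [hsum]
        exact Finset.sum_congr rfl fun i _ => hqres _ _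
      have hqm₀ : q ((n : M) - ∑ i, algebraMap A (PowerSeries A) (a i) • ((x_ i : ↥N) : M))
          ∈ Sk := Submodule.subset_span ⟨_, hMN hm, rfl⟩
      have hsub : (⟨q n, Submodule.subset_span ⟨n, hnN, rfl⟩⟩ : ↥Sk) = ⟨_, hqm₀⟩ +
          ∑ i, IsLocalRing.residue A (a i) • (⟨q ((x_ i : ↥N) : M), hqN i⟩ : ↥Sk) := by
        apply Subtype.ext
        push_cast
        exact hq_eq
      show p₂.mkQ ⟨q n, Submodule.subset_span ⟨n, hnN, rfl⟩⟩ ∈ LinearMap.range f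
      rw [hsub, map_add, map_sum]
      have h0 : p₂.mkQ ⟨_, hqm₀⟩ = 0 := by
        rw [Submodule.mkQ_apply, Submodule.Quotient.mk_eq_zero]
        exact Submodule.mem_comap.mpr (Submodule.subset_span ⟨_, hm, rfl⟩)
      rw [h0, zero_add]
      refine ⟨fun i => IsLocalRing.residue A (a i), ?_⟩
      rw [Fintype.linearCombination_apply]
      exact Finset.sum_congr rfl fun i _ => (map_smul p₂.mkQ _ _).symm
    | zero =>
      show p₂.mkQ 0 ∈ LinearMap.range f
      rw [map_zero]
      exact zero_mem _
    | add x z hx hz ihx ihz =>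
      show p₂.mkQ ((⟨x, hx⟩ : ↥Sk) + ⟨z, hz⟩) ∈ LinearMap.range f
      rw [map_add]
      exact add_mem ihx ihz
    | smul c x hx ih =>
      show p₂.mkQ (c • (⟨x, hx⟩ : ↥Sk)) ∈ LinearMap.range f
      rw [map_smul]
      exact Submodule.smul_mem _ _ ih
  have hsurj : Function.Surjective f := by
    rw [← LinearMap.range_eq_top, eq_top_iff]
    rintro z -
    obtain ⟨⟨y, hy⟩, rfl⟩ := Submodule.Quotient.mk_surjective p₂ z
    exact hgen y hy
  haveI fd2 : FiniteDimensional (IsLocalRing.ResidueField A) (↥Sk ⧸ p₂) :=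
    Module.Finite.of_surjective f hsurj
  have hrk2 : Module.finrank (IsLocalRing.ResidueField A) (↥Sk ⧸ p₂) ≤ Fintype.card ι := by
    calc Module.finrank (IsLocalRing.ResidueField A) (↥Sk ⧸ p₂)
        = Module.finrank (IsLocalRing.ResidueField A)
          (⊤ : Submodule (IsLocalRing.ResidueField A) (↥Sk ⧸ p₂)) := (finrank_top _ _).symm
      _ = Module.finrank (IsLocalRing.ResidueField A) (LinearMap.range f) := by
          rw [LinearMap.range_eq_top.mpr hsurj]
      _ ≤ Module.finrank (IsLocalRing.ResidueField A)
            (ι → (IsLocalRing.ResidueField A)) := LinearMap.finrank_range_le f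
      _ = Fintype.card ι := Module.finrank_fintype_fun_eq_card _
  exact ⟨fd1, fd2, le_trans hrk2 (le_of_eq hrk1.symm)⟩
end

section
/- Let k be a field of characteristic 0. In the field k((y₂))((y₁)) of formal Laurent series in y₁ with coefficients in k((y₂)), let ε be the element whose y₁-coefficient of index n+1 equals (−1)^n·n!·y₂^{−(n+1)} for every n ≥ 0, and whose other coefficients are 0 (the Euler series ε = Σ_{n≥0} (−1)^n n! y₁^{n+1} y₂^{−(n+1)}). Let j : k[[y₂]][[y₁]] → k((y₂))((y₁)) be the canonical embedding of the iterated formal power series ring (i.e., of k[[y₁,y₂]]). Then there exist no N ∈ ℕ and F ∈ k[[y₂]][[y₁]] with y₁^N·y₂^N·ε = j(F); that is, ε does not lie in the image of k[[y₁,y₂]][1/(y₁y₂)] in k((y₂))((y₁)). -/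
lemma zsmul_single_aux {k : Type*} [AddCommGroup k] (z : ℤ) (a : ℤ) (r : k) :
    z • (HahnSeries.single a r : HahnSeries ℤ k) = HahnSeries.single a (z • r) :=
  (map_zsmul (HahnSeries.single.addMonoidHom a) z r).symm

lemma ofPowerSeries_coeff_neg {R : Type*} [Semiring R] (x : PowerSeries R) (m : ℤ)
    (hm : m < 0) : (HahnSeries.ofPowerSeries ℤ R x).coeff m = 0 := by
  rw [HahnSeries.ofPowerSeries_apply, HahnSeries.embDomain_notin_range]
  rintro ⟨n, hn⟩
  simp only [Nat.castOrderEmbedding_apply] at hn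
  omega

/-- The Euler series ε = Σ_{n≥0} (−1)^n n! y₁^{n+1} y₂^{−(n+1)} ∈ k((y₂))((y₁)) does not lie
in the image of k[[y₁,y₂]][1/(y₁y₂)]. -/
theorem stmt_16 {k : Type*} [Field k] [CharZero k]
    (ε : LaurentSeries (LaurentSeries k))
    (hε : ∀ n : ℕ, ε.coeff ((n : ℤ) + 1) =
      (((-1 : ℤ) ^ n * (n.factorial : ℤ))) • (HahnSeries.single (-((n : ℤ) + 1)) (1 : k)))
    (hε0 : ∀ m : ℤ, m ≤ 0 → ε.coeff m = 0) :
    ¬ ∃ (N : ℕ) (F : PowerSeries (PowerSeries k)),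
      (HahnSeries.single (1 : ℤ) (1 : LaurentSeries k)) ^ N *
        (HahnSeries.single (0 : ℤ) (HahnSeries.single (1 : ℤ) (1 : k))) ^ N * ε =
      HahnSeries.ofPowerSeries ℤ (LaurentSeries k)
        (PowerSeries.map (HahnSeries.ofPowerSeries ℤ k) F) := by
  rintro ⟨N, F, h⟩
  have key := congrArg (fun x : LaurentSeries (LaurentSeries k) =>
    (x.coeff ((N : ℤ) + ((N : ℤ) + 1))).coeff (-1)) h
  -- simplify LHS
  rw [HahnSeries.single_pow, HahnSeries.single_pow, HahnSeries.single_mul_single] at key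
  have hsm : ((N : ℤ) + ((N : ℤ) + 1)) = ((N : ℤ) + 1) + (N • (1 : ℤ) + N • (0 : ℤ)) := by simp; omega
  rw [hsm, HahnSeries.coeff_single_mul_add, hε N] at key
  have hL : ((1 : LaurentSeries k) ^ N * HahnSeries.single (1 : ℤ) (1 : k) ^ N *
      (((-1 : ℤ) ^ N * (N.factorial : ℤ)) • (HahnSeries.single (-((N : ℤ) + 1)) (1 : k)))).coeff
        (-1) = ((-1 : ℤ) ^ N * (N.factorial : ℤ) : ℤ) • (1 : k) := by
    rw [one_pow, one_mul, HahnSeries.single_pow, one_pow, mul_smul_comm,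
      HahnSeries.single_mul_single, one_mul]
    have : ((N • (1 : ℤ)) + -((N : ℤ) + 1)) = -1 := by simp
    rw [this, zsmul_single_aux, HahnSeries.coeff_single_same]
  rw [hL] at key
  -- RHS
  have hR : ((HahnSeries.ofPowerSeries ℤ (LaurentSeries k)
      (PowerSeries.map (HahnSeries.ofPowerSeries ℤ k) F)).coeff
        (((N : ℤ) + 1) + (N • (1 : ℤ) + N • (0 : ℤ)))).coeff (-1) = 0 := by
    have he : (((N : ℤ) + 1) + (N • (1 : ℤ) + N • (0 : ℤ))) = ((N + N + 1 : ℕ) : ℤ) := by push_cast; ring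
    rw [he, HahnSeries.ofPowerSeries_apply_coeff, PowerSeries.coeff_map]
    exact ofPowerSeries_coeff_neg _ _ (by norm_num)
  rw [hR] at key
  have : ((-1 : ℤ) ^ N * (N.factorial : ℤ) : ℤ) ≠ 0 := by positivity
  simp only [zsmul_eq_mul, mul_one] at key
  exact this (by exact_mod_cast key)
end
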